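/- arXiv:2410.19024 — 4 statements merged into one kernel-verified Lean document; each statement's English description precedes it below -/
import Mathlib

section
/- Let S ∈ ℝ^n be nonzero with positive entries, N > 0, and U defined by u_k = ⌊N·s_k/‖S‖⌋ with U ≠ 0. Then (1 − n/N²)·(N/‖U‖) + ‖U‖/N ≤ 2·(SᵀU)/(‖S‖·‖U‖) ≤ 2. -/
theorem stmt_1 (n : ℕ) (N : ℝ) (hN : 0 < N)
    (S U : EuclideanSpace ℝ (Fin n)) (hS : S ≠ 0) (hSpos : ∀ k, 0 < S k)
    (hU : ∀ k, U k = ⌊N * S k / ‖S‖⌋) (hU0 : U ≠ 0) :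
    (1 - (n : ℝ) / N ^ 2) * (N / ‖U‖) + ‖U‖ / N ≤
      2 * (∑ k, S k * U k) / (‖S‖ * ‖U‖) ∧
    2 * (∑ k, S k * U k) / (‖S‖ * ‖U‖) ≤ 2 := by
  have hs : 0 < ‖S‖ := norm_pos_iff.mpr hS
  have hu : 0 < ‖U‖ := norm_pos_iff.mpr hU0
  have hS2 : ∑ k, S k ^ 2 = ‖S‖ ^ 2 := by
    rw [EuclideanSpace.norm_eq, Real.sq_sqrt (by positivity)]
    simp [sq_abs]
  have hU2 : ∑ k, U k ^ 2 = ‖U‖ ^ 2 := by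
    rw [EuclideanSpace.norm_eq, Real.sq_sqrt (by positivity)]
    simp [sq_abs]
  have hCS : ∑ k, S k * U k ≤ ‖S‖ * ‖U‖ := by
    have h := real_inner_le_norm S U
    have h2 : (inner ℝ S U : ℝ) = ∑ k, S k * U k := by
      simp [PiLp.inner_apply, RCLike.inner_apply, mul_comm]
    linarith [h2 ▸ h]
  have h1 : ∀ k, (N * S k / ‖S‖ - U k) ^ 2 ≤ 1 := by
    intro k
    have hfr : N * S k / ‖S‖ - U k = Int.fract (N * S k / ‖S‖) := by
      rw [hU k, Int.fract]
    rw [hfr]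
    have h0 := Int.fract_nonneg (N * S k / ‖S‖)
    have hl := Int.fract_lt_one (N * S k / ‖S‖)
    nlinarith
  have h2 : ∑ k, (N * S k / ‖S‖ - U k) ^ 2 ≤ (n : ℝ) := by
    calc ∑ k, (N * S k / ‖S‖ - U k) ^ 2 ≤ ∑ _k : Fin n, (1 : ℝ) :=
          Finset.sum_le_sum (fun k _ => h1 k)
      _ = n := by simp
  have h3 : ∑ k, (N * S k / ‖S‖ - U k) ^ 2
      = N ^ 2 - 2 * (N / ‖S‖) * (∑ k, S k * U k) + ‖U‖ ^ 2 := by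
    have he : ∀ k : Fin n, (N * S k / ‖S‖ - U k) ^ 2
        = (N / ‖S‖) ^ 2 * S k ^ 2 - 2 * (N / ‖S‖) * (S k * U k) + U k ^ 2 := by
      intro k
      field_simp
      ring
    rw [Finset.sum_congr rfl (fun k _ => he k)]
    rw [Finset.sum_add_distrib, Finset.sum_sub_distrib, ← Finset.mul_sum,
      ← Finset.mul_sum, hS2, hU2]
    field_simp
  have key : N ^ 2 - 2 * (N / ‖S‖) * (∑ k, S k * U k) + ‖U‖ ^ 2 ≤ n := h3 ▸ h2
  have key' : ‖S‖ * (N ^ 2 + ‖U‖ ^ 2) - 2 * N * (∑ k, S k * U k) ≤ n * ‖S‖ := by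
    have := mul_le_mul_of_nonneg_right key hs.le
    have hne : ‖S‖ ≠ 0 := ne_of_gt hs
    field_simp at this
    nlinarith [this]
  constructor
  · rw [le_div_iff₀ (by positivity)]
    have hN' : N ≠ 0 := ne_of_gt hN
    have hu' : ‖U‖ ≠ 0 := ne_of_gt hu
    have expand : ((1 - (n : ℝ) / N ^ 2) * (N / ‖U‖) + ‖U‖ / N) * (‖S‖ * ‖U‖)
        = ‖S‖ * (N ^ 2 + ‖U‖ ^ 2 - n) / N := by
      field_simp
      ring
    rw [expand, div_le_iff₀ hN]
    nlinarith [key']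
  · rw [div_le_iff₀ (by positivity)]
    nlinarith [hCS]
end

section
/- Let C ∈ ℝ^n, S a unit vector, ρ > 0, R = √(ρ² + n/4), C' = C − ρS. Suppose x ∈ ℝ^n with ‖x − C‖ ≤ √n/2 satisfies |Sᵀ(x − C)| ≤ ε/2. Then |‖x − C'‖ − R| ≤ ε/2 + n/(8ρ). -/
theorem stmt_9 (n : ℕ) (C S x : EuclideanSpace ℝ (Fin n)) (hS : ‖S‖ = 1)
    (ρ : ℝ) (hρ : 0 < ρ) (R : ℝ) (hR : R = Real.sqrt (ρ ^ 2 + n / 4))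
    (C' : EuclideanSpace ℝ (Fin n)) (hC' : C' = C - ρ • S)
    (ε : ℝ) (hε : 0 < ε)
    (hx : ‖x - C‖ ≤ Real.sqrt n / 2) (hnear : |∑ k, S k * (x k - C k)| ≤ ε / 2) :
    |‖x - C'‖ - R| ≤ ε / 2 + n / (8 * ρ) := by
  set y : EuclideanSpace ℝ (Fin n) := x - C with hy
  set t : ℝ := (inner ℝ S y : ℝ) with htdef
  have ht : |t| ≤ ε / 2 := by
    have : t = ∑ k, S k * (x k - C k) := by
      simp [htdef, hy, PiLp.inner_apply, RCLike.inner_apply, mul_comm]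
    rw [this]; exact hnear
  obtain ⟨ht1, ht2⟩ := abs_le.mp ht
  have hxC' : x - C' = y + ρ • S := by rw [hC', hy]; abel
  have hA2 : ‖x - C'‖ ^ 2 = ‖y‖ ^ 2 + 2 * ρ * t + ρ ^ 2 := by
    rw [hxC', norm_add_sq_real, real_inner_smul_right, real_inner_comm,
      norm_smul, ← htdef, hS]
    simp [abs_of_pos hρ]
    ring
  have hN2 : ‖y‖ ^ 2 ≤ n / 4 := by
    have h0 : (0:ℝ) ≤ ‖y‖ := norm_nonneg _
    have h1 : ‖y‖ ^ 2 ≤ (Real.sqrt n / 2) ^ 2 := by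
      apply pow_le_pow_left₀ h0 hx
    have h2 : (Real.sqrt n / 2) ^ 2 = n / 4 := by
      rw [div_pow, Real.sq_sqrt (by positivity : (0:ℝ) ≤ (n:ℝ))]; norm_num
    linarith
  have hA0 : (0:ℝ) ≤ ‖x - C'‖ := norm_nonneg _
  have hR0 : (0:ℝ) ≤ R := hR ▸ Real.sqrt_nonneg _
  have hR2 : R ^ 2 = ρ ^ 2 + n / 4 := by
    rw [hR, Real.sq_sqrt]; positivity
  have hRρ : ρ ≤ R := by nlinarith [Nat.cast_nonneg (α := ℝ) n]
  have hAt : t + ρ ≤ ‖x - C'‖ := by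
    have h1 : (inner ℝ S (x - C') : ℝ) = t + ρ := by
      rw [hxC', inner_add_right, real_inner_smul_right, ← htdef,
        real_inner_self_eq_norm_sq, hS]
      ring
    have h2 := real_inner_le_norm S (x - C')
    rw [h1, hS, one_mul] at h2
    exact h2
  have hD : 8 * ρ * (n / (8 * ρ)) = n := by field_simp
  have hn0 : (0:ℝ) ≤ n := Nat.cast_nonneg n
  have hD0 : (0:ℝ) ≤ n / (8 * ρ) := by positivity
  rw [abs_le]
  constructor
  · nlinarith
  · nlinarith [sq_nonneg (‖x - C'‖ - R)]
end

section
/- Let C ∈ ℝ^n, S a unit vector, ρ > 0, R = √(ρ² + n/4), C' = C − ρS. Suppose x ∈ ℝ^n with ‖x − C‖ ≤ √n/2 satisfies |‖x − C'‖ − R| ≤ δ/2. Then |Sᵀ(x − C)| ≤ δ/2 + n/(8ρ). -/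
set_option maxHeartbeats 1000000


theorem stmt_10 (n : ℕ) (C S x : EuclideanSpace ℝ (Fin n)) (hS : ‖S‖ = 1)
    (ρ : ℝ) (hρ : 0 < ρ) (R : ℝ) (hR : R = Real.sqrt (ρ ^ 2 + n / 4))
    (C' : EuclideanSpace ℝ (Fin n)) (hC' : C' = C - ρ • S)
    (δ : ℝ) (hδ : 0 < δ)
    (hx : ‖x - C‖ ≤ Real.sqrt n / 2) (hshell : |‖x - C'‖ - R| ≤ δ / 2) :
    |∑ k, S k * (x k - C k)| ≤ δ / 2 + n / (8 * ρ) := by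
  set t : ℝ := inner ℝ S (x - C) with ht
  have hsum : ∑ k, S k * (x k - C k) = t := by
    simp [ht, PiLp.inner_apply, RCLike.inner_apply, mul_comm]
  rw [hsum]
  set a : ℝ := ‖x - C‖ with ha
  set D : ℝ := ‖x - C'‖ with hD
  have hxC' : x - C' = (x - C) + ρ • S := by
    rw [hC']; abel
  have hD2 : D ^ 2 = a ^ 2 + 2 * ρ * t + ρ ^ 2 := by
    rw [hD, hxC', norm_add_sq_real, real_inner_smul_right, real_inner_comm, ← ht,
      norm_smul, hS, Real.norm_eq_abs, abs_of_pos hρ]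
    ring
  have hano : 0 ≤ a := norm_nonneg _
  have hDno : 0 ≤ D := norm_nonneg _
  have ht2 : t ^ 2 ≤ a ^ 2 := by
    have := abs_real_inner_le_norm S (x - C)
    rw [hS, one_mul] at this
    nlinarith [abs_nonneg t, sq_abs t]
  have ha2 : a ^ 2 ≤ n / 4 := by
    have hn : (0:ℝ) ≤ n := Nat.cast_nonneg n
    have : a ^ 2 ≤ (Real.sqrt n / 2) ^ 2 := by
      apply pow_le_pow_left₀ hano hx
    rw [div_pow, Real.sq_sqrt hn] at this
    linarith
  have hRnn : 0 ≤ R := by rw [hR]; exact Real.sqrt_nonneg _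
  have hR2 : R ^ 2 = ρ ^ 2 + n / 4 := by
    rw [hR, Real.sq_sqrt]
    positivity
  clear_value t a D
  clear ht ha hD hsum hxC' hR hC' hx hS
  have h8 : (0:ℝ) < 8 * ρ := by linarith
  have hB : (n : ℝ) / (8 * ρ) * (8 * ρ) = n := div_mul_cancel₀ _ (ne_of_gt h8)
  have hBnn : (0:ℝ) ≤ (n : ℝ) / (8 * ρ) := by positivity
  rw [abs_le] at hshell ⊢
  obtain ⟨hsl, hsu⟩ := hshell
  constructor
  · -- lower bound
    rcases le_or_gt (δ / 2) ρ with h | h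
    · have hDge : ρ - δ / 2 ≤ D := by nlinarith
      have hsq : (ρ - δ / 2) ^ 2 ≤ D ^ 2 := by nlinarith
      have key : -(ρ * δ) - (n:ℝ) / 4 ≤ 2 * ρ * t := by nlinarith
      nlinarith [key, hB]
    · have key : 0 ≤ a ^ 2 + 2 * ρ * t + ρ ^ 2 := by nlinarith
      nlinarith [key, hB, mul_pos hρ hδ]
  · -- upper bound
    have hDge : t + ρ ≤ D := by
      rcases le_or_gt 0 (t + ρ) with h | h
      · nlinarith
      · linarith
    have hRle : R ≤ ρ + (n:ℝ) / (8 * ρ) := by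
      nlinarith [hB, hRnn, sq_nonneg ((n:ℝ) / (8 * ρ)), hBnn]
    linarith
end

section
/- Let S ∈ ℝ^n with positive integer entries and P ∈ {0,1}^n with Sᵀ(P − ½·1) = 0 (a solution of the partition problem). Let U ∈ ℝ^n be any nonzero vector with nonnegative entries and let c_a = SᵀU/(‖S‖‖U‖), d* = (√n/2)·√(1 − c_a²). Then there exists d ∈ [−d*, d*] such that Uᵀ·P = (Uᵀ·1)/2 + d·‖U‖; in particular |Uᵀ·P − (Uᵀ·1)/2| ≤ d*·‖U‖. -/
open RealInnerProductSpace

theorem stmt_14 (n : ℕ) (S U P : EuclideanSpace ℝ (Fin n))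
    (hSint : ∀ k, ∃ m : ℕ, 0 < m ∧ S k = m)
    (hP : ∀ k, P k = 0 ∨ P k = 1)
    (hsol : ∑ k, S k * (P k - 1 / 2) = 0)
    (hU0 : U ≠ 0) (hUpos : ∀ k, 0 ≤ U k)
    (ca ds : ℝ) (hca : ca = (∑ k, S k * U k) / (‖S‖ * ‖U‖))
    (hds : ds = (Real.sqrt n / 2) * Real.sqrt (1 - ca ^ 2)) :
    (∃ d ∈ Set.Icc (-ds) ds, ∑ k, U k * P k = (∑ k, U k) / 2 + d * ‖U‖) ∧
    |∑ k, U k * P k - (∑ k, U k) / 2| ≤ ds * ‖U‖ := by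
  have hn : 0 < n := by
    rcases Nat.eq_zero_or_pos n with h | h
    · subst h; exact absurd (PiLp.ext fun i => i.elim0) hU0
    · exact h
  have hS0 : S ≠ 0 := by
    intro h
    obtain ⟨m, hm, hSm⟩ := hSint ⟨0, hn⟩
    have hpos : (0:ℝ) < S ⟨0, hn⟩ := by rw [hSm]; exact_mod_cast hm
    rw [h] at hpos
    exact lt_irrefl _ hpos
  have hSnorm : (0:ℝ) < ‖S‖ := norm_pos_iff.mpr hS0
  have hUnorm : (0:ℝ) < ‖U‖ := norm_pos_iff.mpr hU0
  set w : EuclideanSpace ℝ (Fin n) := WithLp.toLp 2 (fun k => P k - 1/2) with hw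
  have hinner : ∀ x y : EuclideanSpace ℝ (Fin n), ⟪x, y⟫ = ∑ k, x k * y k := by
    intro x y
    simp [PiLp.inner_apply, mul_comm]
  have hSw : ⟪S, w⟫ = 0 := by rw [hinner]; simpa [hw] using hsol
  have hwnorm : ‖w‖ = Real.sqrt n / 2 := by
    have h1 : ⟪w, w⟫ = (n : ℝ) / 4 := by
      rw [hinner]
      have h2 : ∀ k : Fin n, w k * w k = 1/4 := by
        intro k
        rcases hP k with h | h <;> simp [hw, h] <;> norm_num
      rw [Finset.sum_congr rfl fun k _ => h2 k]
      simp; ring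
    have h3 := real_inner_self_eq_norm_sq w
    rw [h1] at h3
    have h4 : ‖w‖ = Real.sqrt ((n:ℝ)/4) := by
      rw [h3, Real.sqrt_sq (norm_nonneg w)]
    rw [h4, show (n:ℝ)/4 = n * (1/2)^2 by ring, Real.sqrt_mul (Nat.cast_nonneg n),
      Real.sqrt_sq (by norm_num)]
    ring
  have hSU : (⟪S, U⟫ : ℝ) = ca * (‖S‖ * ‖U‖) := by
    rw [hca, ← hinner, div_mul_cancel₀ _ (mul_pos hSnorm hUnorm).ne']
  have hproj : ‖U - (⟪S, U⟫ / ‖S‖^2) • S‖^2 = ‖U‖^2 * (1 - ca^2) := by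
    rw [norm_sub_sq_real, real_inner_smul_right, norm_smul, Real.norm_eq_abs, mul_pow,
      sq_abs, show (⟪U, S⟫ : ℝ) = ca * (‖S‖ * ‖U‖) from (real_inner_comm S U) ▸ hSU]
    field_simp
    rw [hSU]
    ring
  have h1ca : 0 ≤ 1 - ca^2 := by
    have h5 := abs_real_inner_le_norm S U
    have hca' : |ca| ≤ 1 := by
      rw [hca, ← hinner, abs_div, abs_of_pos (mul_pos hSnorm hUnorm)]
      exact div_le_one_of_le₀ h5 (by positivity)
    nlinarith [abs_nonneg ca, sq_abs ca]
  have hprojnorm : ‖U - (⟪S, U⟫ / ‖S‖^2) • S‖ = ‖U‖ * Real.sqrt (1 - ca^2) := by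
    have h6 : ‖U - (⟪S, U⟫ / ‖S‖^2) • S‖ = Real.sqrt (‖U‖^2 * (1 - ca^2)) := by
      rw [← hproj, Real.sqrt_sq (norm_nonneg _)]
    rw [h6, Real.sqrt_mul (by positivity), Real.sqrt_sq (norm_nonneg U)]
  have hUw : ⟪U, w⟫ = ⟪U - (⟪S, U⟫ / ‖S‖^2) • S, w⟫ := by
    rw [inner_sub_left, real_inner_smul_left, hSw]
    ring
  have hbound : |⟪U, w⟫| ≤ ds * ‖U‖ := by
    rw [hUw]
    calc |⟪U - (⟪S, U⟫ / ‖S‖^2) • S, w⟫| ≤ ‖U - (⟪S, U⟫ / ‖S‖^2) • S‖ * ‖w‖ :=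
        abs_real_inner_le_norm _ _
      _ = ds * ‖U‖ := by rw [hprojnorm, hwnorm, hds]; ring
  have hkey : ∑ k, U k * P k - (∑ k, U k) / 2 = ⟪U, w⟫ := by
    rw [hinner, Finset.sum_div, ← Finset.sum_sub_distrib]
    congr 1; ext k; simp [hw]; ring
  constructor
  · refine ⟨(∑ k, U k * P k - (∑ k, U k) / 2) / ‖U‖, ?_, ?_⟩
    · rw [Set.mem_Icc, hkey]
      constructor
      · rw [le_div_iff₀ hUnorm]
        nlinarith [abs_le.mp hbound]
      · rw [div_le_iff₀ hUnorm]
        exact (abs_le.mp hbound).2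
    · field_simp
      ring
  · rw [hkey]; exact hbound
end
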